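/- Approximating set attractivity at infinity: Let f : ℝⁿ → ℝⁿ be a continuous vector field homogeneous in the ∞-limit with triple (r_∞, 𝔡_∞, f_∞), and suppose V_∞ : ℝⁿ → ℝ₊ is a C¹, proper, positive definite function, weighted homogeneous with weight r_∞ and degree d_{V_∞}, such that ⟨∇V_∞(x), f_∞(x)⟩ < 0 for all x ≠ 0. Then there exists λ_∞ > 0 such that ⟨∇V_∞(x), f(x)⟩ < 0 for all x with |x|_{r_∞} ≥ λ_∞. -/

import Mathlib

noncomputable def dil {n : ℕ} (r : Fin n → ℝ) (l : ℝ) (x : Fin n → ℝ) : Fin n → ℝ :=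
  fun i => l ^ (r i) * x i

noncomputable def hnorm {n : ℕ} (r : Fin n → ℝ) (x : Fin n → ℝ) : ℝ :=
  ∑ i, |x i| ^ (1 / r i)

/-- `φ` is homogeneous in the ∞-limit with associated triple `(r, d, φinf)`. -/
def HomogInf {n : ℕ} (r : Fin n → ℝ) (d : ℝ) (φ φinf : (Fin n → ℝ) → ℝ) : Prop :=
  Continuous φ ∧ Continuous φinf ∧ φinf ≠ 0 ∧
    ∀ C : Set (Fin n → ℝ), IsCompact C → (0 : Fin n → ℝ) ∉ C →
      ∀ ε > (0:ℝ), ∃ linf > (0:ℝ), ∀ x ∈ C, ∀ l : ℝ, l ≥ linf →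
        |φ (dil r l x) / l ^ d - φinf x| ≤ ε

lemma hnorm_dil {n : ℕ} (r : Fin n → ℝ) (hr : ∀ i, 0 < r i) {l : ℝ} (hl : 0 < l)
    (x : Fin n → ℝ) : hnorm r (dil r l x) = l * hnorm r x := by
  unfold hnorm dil
  rw [Finset.mul_sum]
  refine Finset.sum_congr rfl fun i _ => ?_
  have hlr : (0:ℝ) < l ^ (r i) := Real.rpow_pos_of_pos hl _
  rw [abs_mul, abs_of_pos hlr,
    Real.mul_rpow hlr.le (abs_nonneg _), ← Real.rpow_mul hl.le,
    mul_one_div, div_self (hr i).ne', Real.rpow_one]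

lemma dil_dil_inv {n : ℕ} (r : Fin n → ℝ) {l : ℝ} (hl : 0 < l) (y : Fin n → ℝ) :
    dil r l (dil r l⁻¹ y) = y := by
  funext i
  have hlr : (l : ℝ) ^ (r i) ≠ 0 := (Real.rpow_pos_of_pos hl _).ne'
  simp only [dil, Real.inv_rpow hl.le]
  rw [mul_inv_cancel_left₀ hlr]

lemma fderiv_hom {n : ℕ} (r : Fin n → ℝ) (dV : ℝ) (V : (Fin n → ℝ) → ℝ)
    (hV : ContDiff ℝ 1 V)
    (hVhom : ∀ l : ℝ, 0 < l → ∀ x, V (dil r l x) = l ^ dV * V x)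
    {l : ℝ} (hl : 0 < l) (x v : Fin n → ℝ) :
    fderiv ℝ V (dil r l x) (dil r l v) = l ^ dV * fderiv ℝ V x v := by
  set D : (Fin n → ℝ) →L[ℝ] (Fin n → ℝ) :=
    ContinuousLinearMap.pi (fun i => (l ^ r i) • ContinuousLinearMap.proj i) with hD
  have hDapp : ∀ w, D w = dil r l w := by
    intro w; funext i; simp [hD, dil, ContinuousLinearMap.proj]
  have hdiff := hV.differentiable one_ne_zero
  have h1 : HasFDerivAt (fun y => V (D y)) ((fderiv ℝ V (D x)).comp D) x :=
    (hdiff (D x)).hasFDerivAt.comp x D.hasFDerivAt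
  have h2 : (fun y => V (D y)) = fun y => l ^ dV * V y := by
    funext y; rw [hDapp, hVhom l hl y]
  rw [h2] at h1
  have h3 : HasFDerivAt (fun y => l ^ dV * V y) ((l ^ dV) • fderiv ℝ V x) x :=
    (hdiff x).hasFDerivAt.const_mul _
  have heq := h1.unique h3
  have happ := congrArg (fun L : (Fin n → ℝ) →L[ℝ] ℝ => L v) heq
  simp only [ContinuousLinearMap.coe_comp', Function.comp_apply,
    ContinuousLinearMap.coe_smul', Pi.smul_apply, smul_eq_mul] at happ
  rw [hDapp, hDapp] at happ
  exact happ

/-- If the homogeneous approximation at infinity admits a strict homogeneous Lyapunov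
function, then far enough from the origin its derivative along `f` is also negative. -/
theorem attractivity_at_infinity {n : ℕ} (rinf : Fin n → ℝ) (hrinf : ∀ i, 0 < rinf i)
    (dinf dV : ℝ)
    (f finf : (Fin n → ℝ) → (Fin n → ℝ))
    (hf : ∀ i : Fin n,
      HomogInf rinf (dinf + rinf i) (fun x => f x i) (fun x => finf x i))
    (V : (Fin n → ℝ) → ℝ)
    (hV : ContDiff ℝ 1 V)
    (hproper : Filter.Tendsto V (Filter.cocompact (Fin n → ℝ)) Filter.atTop)
    (hVpd : V 0 = 0 ∧ ∀ x ≠ 0, 0 < V x)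
    (hVhom : ∀ l : ℝ, 0 < l → ∀ x, V (dil rinf l x) = l ^ dV * V x)
    (hLyap : ∀ x : Fin n → ℝ, x ≠ 0 → fderiv ℝ V x (finf x) < 0) :
    ∃ linf > (0:ℝ), ∀ x : Fin n → ℝ, hnorm rinf x ≥ linf → fderiv ℝ V x (f x) < 0 := by
  rcases Nat.eq_zero_or_pos n with hn | hn
  · refine ⟨1, one_pos, fun x hx => ?_⟩
    subst hn
    simp [hnorm] at hx
    linarith
  -- the unit hnorm sphere
  set S : Set (Fin n → ℝ) := {x | hnorm rinf x = 1} with hS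
  have hnorm_cont : Continuous (hnorm rinf) := by
    unfold hnorm
    refine continuous_finset_sum _ fun i _ => ?_
    rw [continuous_iff_continuousAt]
    intro x
    exact (Real.continuousAt_rpow_const _ _
        (Or.inr (one_div_pos.mpr (hrinf i)).le)).comp
      ((continuous_abs.comp (continuous_apply i)).continuousAt)
  have hSclosed : IsClosed S := isClosed_eq hnorm_cont continuous_const
  have hterm_nonneg : ∀ (x : Fin n → ℝ) (i : Fin n), 0 ≤ |x i| ^ (1 / rinf i) :=
    fun x i => Real.rpow_nonneg (abs_nonneg _) _
  have hSsub : S ⊆ Metric.closedBall 0 1 := by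
    intro x hx
    rw [mem_closedBall_zero_iff]
    rw [pi_norm_le_iff_of_nonneg zero_le_one]
    intro i
    have hx1 : ∑ j, |x j| ^ (1 / rinf j) = 1 := hx
    have hterm : |x i| ^ (1 / rinf i) ≤ 1 := by
      have h := Finset.single_le_sum (f := fun j => |x j| ^ (1 / rinf j))
        (fun j _ => hterm_nonneg x j) (Finset.mem_univ i)
      exact le_of_le_of_eq h hx1
    rw [Real.norm_eq_abs]
    by_contra hgt
    push_neg at hgt
    have : 1 < |x i| ^ (1 / rinf i) :=
      (Real.one_lt_rpow_iff_of_pos (lt_trans one_pos hgt)).mpr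
        (Or.inl ⟨hgt, one_div_pos.mpr (hrinf i)⟩)
    linarith
  have hScompact : IsCompact S :=
    (isCompact_closedBall 0 1).of_isClosed_subset hSclosed hSsub
  have hS0 : (0 : Fin n → ℝ) ∉ S := by
    intro h0
    have : hnorm rinf (0 : Fin n → ℝ) = 1 := h0
    unfold hnorm at this
    simp only [Pi.zero_apply, abs_zero] at this
    rw [Finset.sum_congr rfl
      (fun i _ => Real.zero_rpow (one_div_pos.mpr (hrinf i)).ne')] at this
    simp at this
  have hSne : S.Nonempty := by
    refine ⟨Pi.single ⟨0, hn⟩ 1, ?_⟩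
    show hnorm rinf _ = 1
    unfold hnorm
    rw [Finset.sum_eq_single_of_mem ⟨0, hn⟩ (Finset.mem_univ _)]
    · simp
    · intro j _ hj
      rw [Pi.single_eq_of_ne hj, abs_zero,
        Real.zero_rpow (one_div_pos.mpr (hrinf j)).ne']
  -- continuity of W = fderiv V and finf
  set W : (Fin n → ℝ) → (Fin n → ℝ) →L[ℝ] ℝ := fderiv ℝ V with hW
  have hWcont : Continuous W := hV.continuous_fderiv one_ne_zero
  have hfinfcont : Continuous finf := continuous_pi fun i => (hf i).2.1
  have hhcont : Continuous fun x => W x (finf x) := hWcont.clm_apply hfinfcont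
  -- negative max of W x (finf x) on S
  obtain ⟨x₀, hx₀S, hx₀max⟩ :=
    hScompact.exists_isMaxOn hSne hhcont.continuousOn
  set c : ℝ := -(W x₀ (finf x₀)) with hc
  have hcpos : 0 < c := by
    have : W x₀ (finf x₀) < 0 := hLyap x₀ (fun h => hS0 (h ▸ hx₀S))
    linarith
  -- bound on ‖W x‖ on S
  obtain ⟨x₁, hx₁S, hx₁max⟩ :=
    hScompact.exists_isMaxOn hSne (hWcont.norm.continuousOn)
  set M : ℝ := ‖W x₁‖ with hM
  have hMnonneg : 0 ≤ M := norm_nonneg _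
  set ε : ℝ := c / (2 * (M + 1)) with hε
  have hεpos : 0 < ε := by positivity
  -- uniform approximation on S
  have Happrox : ∀ i : Fin n, ∃ L > (0:ℝ), ∀ x ∈ S, ∀ l : ℝ, l ≥ L →
      |f (dil rinf l x) i / l ^ (dinf + rinf i) - finf x i| ≤ ε :=
    fun i => (hf i).2.2.2 S hScompact hS0 ε hεpos
  choose Lf hLfpos hLf using Happrox
  refine ⟨1 + ∑ i, max (Lf i) 0, by positivity, ?_⟩
  set L : ℝ := 1 + ∑ i, max (Lf i) 0 with hLdef
  have hL1 : (1:ℝ) ≤ L := by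
    have : (0:ℝ) ≤ ∑ i, max (Lf i) 0 :=
      Finset.sum_nonneg fun i _ => le_max_right _ _
    linarith
  have hLge : ∀ i, Lf i ≤ L := by
    intro i
    have h1 : Lf i ≤ max (Lf i) 0 := le_max_left _ _
    have h2 : max (Lf i) 0 ≤ ∑ j, max (Lf j) 0 :=
      Finset.single_le_sum (f := fun j => max (Lf j) 0)
        (fun j _ => le_max_right _ _) (Finset.mem_univ i)
    linarith
  intro y hy
  set l : ℝ := hnorm rinf y with hl
  have hlL : l ≥ L := hy
  have hlpos : 0 < l := lt_of_lt_of_le (by linarith : (0:ℝ) < L) hlL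
  set x : Fin n → ℝ := dil rinf l⁻¹ y with hx
  have hyx : dil rinf l x = y := dil_dil_inv rinf hlpos y
  have hxS : x ∈ S := by
    show hnorm rinf x = 1
    rw [hx, hnorm_dil rinf hrinf (inv_pos.mpr hlpos), ← hl, inv_mul_cancel₀ hlpos.ne']
  -- the rescaled vector field
  set g : Fin n → ℝ := fun i => f y i / l ^ (dinf + rinf i) with hg
  have hgapprox : ∀ i, |g i - finf x i| ≤ ε := by
    intro i
    have := hLf i x hxS l (le_trans (hLge i) hlL)
    rw [hyx] at this
    exact this
  -- homogeneity identity
  have hvdef : dil rinf l (fun i => (l ^ rinf i)⁻¹ * f y i) = f y := by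
    funext i
    simp only [dil]
    rw [mul_inv_cancel_left₀ (Real.rpow_pos_of_pos hlpos _).ne']
  have hkey : fderiv ℝ V y (f y) = l ^ dV * fderiv ℝ V x (fun i => (l ^ rinf i)⁻¹ * f y i) := by
    have h := fderiv_hom rinf dV V hV hVhom hlpos x (fun i => (l ^ rinf i)⁻¹ * f y i)
    rw [hvdef, hyx] at h
    exact h
  -- rewrite the vector as l^dinf • g
  have hvg : (fun i => (l ^ rinf i)⁻¹ * f y i) = (l ^ dinf) • g := by
    funext i
    simp only [hg, Pi.smul_apply, smul_eq_mul]
    rw [Real.rpow_add hlpos, div_eq_mul_inv, mul_inv]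
    field_simp
  rw [hvg, map_smul, smul_eq_mul] at hkey
  -- estimate
  have hWx : W x ((l ^ dinf) • g) = l ^ dinf * W x g := by
    rw [map_smul, smul_eq_mul]
  have hgnorm : ‖g - finf x‖ ≤ ε := by
    rw [pi_norm_le_iff_of_nonneg hεpos.le]
    intro i
    rw [Pi.sub_apply, Real.norm_eq_abs]
    exact hgapprox i
  have hWbound : W x g < 0 := by
    have h1 : |W x g - W x (finf x)| ≤ M * ε := by
      rw [← map_sub]
      calc |W x (g - finf x)| = ‖W x (g - finf x)‖ := (Real.norm_eq_abs _).symm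
        _ ≤ ‖W x‖ * ‖g - finf x‖ := (W x).le_opNorm _
        _ ≤ M * ε := mul_le_mul (hx₁max hxS) hgnorm (norm_nonneg _) hMnonneg
    have h2 : W x (finf x) ≤ -c := by
      have h : W x (finf x) ≤ W x₀ (finf x₀) := hx₀max hxS
      simp only [hc]
      linarith
    have h3 : W x g ≤ W x (finf x) + M * ε := by
      have := abs_le.1 h1
      linarith [this.2]
    have hMε : M * ε < c := by
      have hle : M * ε ≤ (M + 1) * ε :=
        mul_le_mul_of_nonneg_right (by linarith) hεpos.le
      have heq : (M + 1) * ε = c / 2 := by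
        rw [hε]; field_simp
      linarith
    linarith
  have hfac : 0 < l ^ dV * (l ^ dinf) := by positivity
  calc fderiv ℝ V y (f y) = l ^ dV * (l ^ dinf * W x g) := hkey
    _ = (l ^ dV * l ^ dinf) * W x g := by ring
    _ < 0 := mul_neg_of_pos_of_neg (by positivity) hWbound
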